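/- If a poset-causal system is weakly locally controllable (every local pair (A_ii, B_ii) is controllable), then the global system is controllable, i.e., R(A,B) = X. -/

import Mathlib

open Matrix

attribute [local instance] Classical.propDecidable

/-- Block index type for a partition `n` over the index set `P`. -/
abbrev BIdx {P : Type*} (n : P → ℕ) : Type _ := (i : P) × Fin (n i)

variable {P : Type*} [Fintype P] [DecidableEq P]

/-- The embedding matrix `I_n(:,S)` of `ℝ^{n_S}` into `ℝ^{n}`. -/
noncomputable def embMat (n : P → ℕ) (S : Set P) :
    Matrix (BIdx n) {a : BIdx n // a.1 ∈ S} ℝ :=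
  Matrix.of fun p q => if p = (q : BIdx n) then 1 else 0

/-- The matrix of the orthogonal projection onto the coordinate subspace of block indices in `S`. -/
noncomputable def projMat (n : P → ℕ) (S : Set P) : Matrix (BIdx n) (BIdx n) ℝ :=
  Matrix.of fun p q => if p = q ∧ p.1 ∈ S then 1 else 0

/-- Downstream set `↓S = {i | ∃ j ∈ S, j ⪰ i}` (where `j ⪰ i` is encoded as `le i j`). -/
def downSet (le : P → P → Prop) (S : Set P) : Set P := {i | ∃ j ∈ S, le i j}

/-- Upstream set `↑S = {i | ∃ j ∈ S, i ⪰ j}`. -/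
def upSet (le : P → P → Prop) (S : Set P) : Set P := {i | ∃ j ∈ S, le j i}

/-- Membership of a block matrix in the block incidence space: `G_{ab} = 0` whenever `b ⋡ a`. -/
def Inc (le : P → P → Prop) {n m : P → ℕ} (G : Matrix (BIdx n) (BIdx m) ℝ) : Prop :=
  ∀ a b, ¬ le a.1 b.1 → G a b = 0

/-- Block compression `G(Q,S)` of a block matrix to block rows in `Q` and block columns in `S`. -/
def bcmp {n m : P → ℕ} (G : Matrix (BIdx n) (BIdx m) ℝ) (Q S : Set P) :
    Matrix {a : BIdx n // a.1 ∈ Q} {a : BIdx m // a.1 ∈ S} ℝ :=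
  G.submatrix Subtype.val Subtype.val

/-- The reachable subspace `R(A,B) = im [B, AB, ..., A^{n-1}B]`. -/
noncomputable def reach {ι κ : Type*} [Fintype ι] [Fintype κ] [DecidableEq ι]
    (A : Matrix ι ι ℝ) (B : Matrix ι κ ℝ) : Submodule ℝ (ι → ℝ) :=
  ⨆ k : Fin (Fintype.card ι), LinearMap.range ((A ^ (k : ℕ) * B).mulVecLin)

/-- The unobservable subspace `N(C,A) = ker [C; CA; ...; CA^{n-1}]`. -/
noncomputable def unobs {ι κ : Type*} [Fintype ι] [Fintype κ] [DecidableEq ι]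
    (C : Matrix κ ι ℝ) (A : Matrix ι ι ℝ) : Submodule ℝ (ι → ℝ) :=
  ⨅ k : Fin (Fintype.card ι), LinearMap.ker ((C * A ^ (k : ℕ)).mulVecLin)

/-- The reachable subspace, inside Euclidean space. -/
noncomputable def reachE {ι κ : Type*} [Fintype ι] [Fintype κ] [DecidableEq ι] [DecidableEq κ]
    (A : Matrix ι ι ℝ) (B : Matrix ι κ ℝ) : Submodule ℝ (EuclideanSpace ℝ ι) :=
  ⨆ k : Fin (Fintype.card ι), LinearMap.range (Matrix.toEuclideanLin (A ^ (k : ℕ) * B))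

/-- The unobservable subspace, inside Euclidean space. -/
noncomputable def unobsE {ι κ : Type*} [Fintype ι] [Fintype κ] [DecidableEq ι] [DecidableEq κ]
    (C : Matrix κ ι ℝ) (A : Matrix ι ι ℝ) : Submodule ℝ (EuclideanSpace ℝ ι) :=
  ⨅ k : Fin (Fintype.card ι), LinearMap.ker (Matrix.toEuclideanLin (C * A ^ (k : ℕ)))

/-- The coordinate subspace `X_S = ⊕_{j ∈ S} X_j` of the global state space. -/
noncomputable def coordSub (n : P → ℕ) (S : Set P) : Submodule ℝ (BIdx n → ℝ) :=
  LinearMap.range (projMat n S).mulVecLin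

/-- The coordinate subspace `X_S`, inside Euclidean space. -/
noncomputable def coordE (n : P → ℕ) (S : Set P) : Submodule ℝ (EuclideanSpace ℝ (BIdx n)) :=
  LinearMap.range (Matrix.toEuclideanLin (projMat n S))

/-- The `i`-downstream reachable set `R_i = R(A(↓i,↓i), B(↓i,i))`, embedded into the
global state space via `I_n(:,↓i)`. -/
noncomputable def Ri (le : P → P → Prop) {n m : P → ℕ}
    (A : Matrix (BIdx n) (BIdx n) ℝ) (B : Matrix (BIdx n) (BIdx m) ℝ) (i : P) :
    Submodule ℝ (BIdx n → ℝ) :=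
  Submodule.map (embMat n (downSet le {i})).mulVecLin
    (reach (bcmp A (downSet le {i}) (downSet le {i})) (bcmp B (downSet le {i}) {i}))

/-- The `i`-downstream reachable set, inside Euclidean space. -/
noncomputable def RiE (le : P → P → Prop) {n m : P → ℕ}
    (A : Matrix (BIdx n) (BIdx n) ℝ) (B : Matrix (BIdx n) (BIdx m) ℝ) (i : P) :
    Submodule ℝ (EuclideanSpace ℝ (BIdx n)) :=
  Submodule.map (Matrix.toEuclideanLin (embMat n (downSet le {i})))
    (reachE (bcmp A (downSet le {i}) (downSet le {i})) (bcmp B (downSet le {i}) {i}))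

/-- The `i`-upstream indistinguishable set `N_i = N(C(i,↑i), A(↑i,↑i))`, embedded into the
global state space via `I_n(:,↑i)`. -/
noncomputable def Ni (le : P → P → Prop) {n r : P → ℕ}
    (C : Matrix (BIdx r) (BIdx n) ℝ) (A : Matrix (BIdx n) (BIdx n) ℝ) (i : P) :
    Submodule ℝ (BIdx n → ℝ) :=
  Submodule.map (embMat n (upSet le {i})).mulVecLin
    (unobs (bcmp C {i} (upSet le {i})) (bcmp A (upSet le {i}) (upSet le {i})))

/-- The `i`-upstream indistinguishable set, inside Euclidean space. -/
noncomputable def NiE (le : P → P → Prop) {n r : P → ℕ}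
    (C : Matrix (BIdx r) (BIdx n) ℝ) (A : Matrix (BIdx n) (BIdx n) ℝ) (i : P) :
    Submodule ℝ (EuclideanSpace ℝ (BIdx n)) :=
  Submodule.map (Matrix.toEuclideanLin (embMat n (upSet le {i})))
    (unobsE (bcmp C {i} (upSet le {i})) (bcmp A (upSet le {i}) (upSet le {i})))

/-- If a linear functional (given by dot product against `v`) vanishes on `reach A B`,
then `v ᵥ* (A ^ k * B) = 0` for all `k < card ι`. -/
lemma reach_dual_vecMul {ι κ : Type*} [Fintype ι] [Fintype κ] [DecidableEq ι] [DecidableEq κ]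
    (A : Matrix ι ι ℝ) (B : Matrix ι κ ℝ) (v : ι → ℝ)
    (h : ∀ x ∈ reach A B, v ⬝ᵥ x = 0) (k : ℕ) (hk : k < Fintype.card ι) :
    v ᵥ* (A ^ k * B) = 0 := by
  funext b
  have hx : (A ^ k * B) *ᵥ Pi.single b 1 ∈ reach A B := by
    apply Submodule.mem_iSup_of_mem (⟨k, hk⟩ : Fin (Fintype.card ι))
    exact ⟨Pi.single b 1, rfl⟩
  have h2 := h _ hx
  rw [Matrix.dotProduct_mulVec, dotProduct_single, mul_one] at h2
  simpa using h2

/-- If `reach A B = ⊤` and `v ᵥ* (A ^ k * B) = 0` for all `k < card ι`, then `v = 0`. -/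
lemma eq_zero_of_reach_eq_top {ι κ : Type*} [Fintype ι] [Fintype κ] [DecidableEq ι]
    [DecidableEq κ]
    (A : Matrix ι ι ℝ) (B : Matrix ι κ ℝ) (v : ι → ℝ)
    (h : reach A B = ⊤) (hv : ∀ k : ℕ, k < Fintype.card ι → v ᵥ* (A ^ k * B) = 0) :
    v = 0 := by
  let φ : (ι → ℝ) →ₗ[ℝ] ℝ :=
    { toFun := fun x => v ⬝ᵥ x
      map_add' := fun x y => dotProduct_add v x y
      map_smul' := fun c x => by simp [dotProduct_smul] }
  have hker : reach A B ≤ LinearMap.ker φ := by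
    apply iSup_le
    intro k
    rintro x ⟨u, rfl⟩
    have h0 := hv k k.2
    simp only [LinearMap.mem_ker, Matrix.mulVecLin_apply, φ, LinearMap.coe_mk, AddHom.coe_mk]
    rw [Matrix.dotProduct_mulVec, h0, zero_dotProduct]
  funext b
  have hb : (Pi.single b 1 : ι → ℝ) ∈ reach A B := by rw [h]; trivial
  have := hker hb
  rw [LinearMap.mem_ker] at this
  simpa [φ, dotProduct_single] using this

/-- If a poset-causal system is weakly locally controllable (every local pair `(A_ii, B_ii)`
is controllable), then the global system is controllable: `R(A,B) = X`. -/
theorem weaklyLocallyControllable_implies_controllable [PartialOrder P]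
    (n m : P → ℕ)
    (A : Matrix (BIdx n) (BIdx n) ℝ) (B : Matrix (BIdx n) (BIdx m) ℝ)
    (hA : Inc (· ≤ ·) A) (hB : Inc (· ≤ ·) B)
    (hloc : ∀ i : P, reach (A.submatrix (fun a => (⟨i, a⟩ : BIdx n)) (fun a => (⟨i, a⟩ : BIdx n)))
      (B.submatrix (fun a => (⟨i, a⟩ : BIdx n)) (fun a => (⟨i, a⟩ : BIdx m))) = ⊤) :
    reach A B = ⊤ := by
  by_contra hne
  obtain ⟨φ, hφ0, hφmap⟩ :=
    Submodule.exists_dual_map_eq_bot_of_lt_top (p := reach A B)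
      (lt_top_iff_ne_top.mpr hne) inferInstance
  set v : BIdx n → ℝ := fun a => φ (Pi.single a 1) with hvdef
  have hφeq : ∀ x : BIdx n → ℝ, φ x = v ⬝ᵥ x := by
    intro x
    have hx : x = ∑ a : BIdx n, x a • (Pi.single a (1 : ℝ) : BIdx n → ℝ) := by
      funext j
      simp [Finset.sum_apply, Pi.single_apply]
    conv_lhs => rw [hx]
    rw [map_sum]
    simp only [_root_.map_smul, smul_eq_mul]
    simp [dotProduct, v, mul_comm]
  have hvan : ∀ x ∈ reach A B, v ⬝ᵥ x = 0 := by
    intro x hx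
    have hmem : φ x ∈ Submodule.map φ (reach A B) := ⟨x, hx, rfl⟩
    rw [hφmap, Submodule.mem_bot] at hmem
    rw [← hφeq]; exact hmem
  have hv0 : v ≠ 0 := by
    intro h0
    apply hφ0
    apply LinearMap.ext
    intro x
    rw [hφeq, h0]
    simp
  -- the set of blocks where v is nonzero
  set S : Set P := {j : P | ∃ β : Fin (n j), v ⟨j, β⟩ ≠ 0} with hSdef
  have hSne : S.Nonempty := by
    obtain ⟨a, ha⟩ := Function.ne_iff.mp hv0
    exact ⟨a.1, a.2, ha⟩
  obtain ⟨i, hiS, himin'⟩ := Set.Finite.exists_minimalFor id S (Set.toFinite S) hSne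
  have himin : ∀ a' ∈ S, id a' ≤ id i → id i = id a' := fun a' ha' h => le_antisymm (himin' ha' h) h
  simp only [id] at himin
  -- local data at block i
  set Ai : Matrix (Fin (n i)) (Fin (n i)) ℝ :=
    A.submatrix (fun a => (⟨i, a⟩ : BIdx n)) (fun a => (⟨i, a⟩ : BIdx n)) with hAidef
  set Bi : Matrix (Fin (n i)) (Fin (m i)) ℝ :=
    B.submatrix (fun a => (⟨i, a⟩ : BIdx n)) (fun a => (⟨i, a⟩ : BIdx m)) with hBidef
  set vi : Fin (n i) → ℝ := fun β => v ⟨i, β⟩ with hvidef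
  -- computing a block entry of w ᵥ* M for supported w and incidence M
  have block_sum : ∀ (m' : P → ℕ) (M : Matrix (BIdx n) (BIdx m') ℝ), Inc (· ≤ ·) M →
      ∀ w : BIdx n → ℝ, (∀ a : BIdx n, w a ≠ 0 → ∃ j ∈ S, j ≤ a.1) →
      ∀ γ : Fin (m' i),
        (w ᵥ* M) (⟨i, γ⟩ : BIdx m') = ∑ α : Fin (n i), w ⟨i, α⟩ * M ⟨i, α⟩ ⟨i, γ⟩ := by
    intro m' M hM w hw γ
    have : (w ᵥ* M) (⟨i, γ⟩ : BIdx m')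
        = ∑ a : BIdx n, w a * M a ⟨i, γ⟩ := rfl
    rw [this, ← Finset.univ_sigma_univ, Finset.sum_sigma]
    refine Finset.sum_eq_single_of_mem i (Finset.mem_univ i) ?_
    intro j _ hji
    apply Finset.sum_eq_zero
    intro α _
    by_cases hwz : w ⟨j, α⟩ = 0
    · rw [hwz, zero_mul]
    by_cases hle : j ≤ i
    · obtain ⟨j', hj'S, hj'⟩ := hw ⟨j, α⟩ hwz
      have hj'i : j' = i := (himin j' hj'S (le_trans hj' hle)).symm
      exact absurd (le_antisymm hle (hj'i ▸ hj')) hji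
    · rw [hM ⟨j, α⟩ ⟨i, γ⟩ hle, mul_zero]
  -- main induction on powers
  have key : ∀ k : ℕ,
      (∀ a : BIdx n, (v ᵥ* (A ^ k)) a ≠ 0 → ∃ j ∈ S, j ≤ a.1) ∧
      (∀ β : Fin (n i), (v ᵥ* (A ^ k)) ⟨i, β⟩ = (vi ᵥ* (Ai ^ k)) β) := by
    intro k
    induction k with
    | zero =>
      constructor
      · intro a ha
        rw [pow_zero, Matrix.vecMul_one] at ha
        exact ⟨a.1, ⟨a.2, ha⟩, le_refl _⟩
      · intro β
        simp only [pow_zero, Matrix.vecMul_one]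
        rfl
    | succ k ih =>
      have hsupp := ih.1
      have hblk := ih.2
      constructor
      · intro b hb
        rw [pow_succ, ← Matrix.vecMul_vecMul] at hb
        have : ∃ a : BIdx n, (v ᵥ* (A ^ k)) a * A a b ≠ 0 := by
          by_contra hc
          push_neg at hc
          exact hb (Finset.sum_eq_zero fun a _ => hc a)
        obtain ⟨a, ha⟩ := this
        obtain ⟨j, hjS, hja⟩ := hsupp a (left_ne_zero_of_mul ha)
        have hab : a.1 ≤ b.1 := by
          by_contra hab
          exact right_ne_zero_of_mul ha (hA a b hab)
        exact ⟨j, hjS, le_trans hja hab⟩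
      · intro β
        rw [pow_succ, ← Matrix.vecMul_vecMul, pow_succ, ← Matrix.vecMul_vecMul]
        rw [block_sum n A hA (v ᵥ* (A ^ k)) hsupp β]
        have : ((vi ᵥ* (Ai ^ k)) ᵥ* Ai) β
            = ∑ α : Fin (n i), (vi ᵥ* (Ai ^ k)) α * Ai α β := rfl
        rw [this]
        refine Finset.sum_congr rfl fun α _ => ?_
        rw [hblk α]
        rfl
  -- the local controllability data kills vi
  have hniN : n i ≤ Fintype.card (BIdx n) := by
    rw [Fintype.card_sigma]
    have := Finset.single_le_sum
      (f := fun j : P => Fintype.card (Fin (n j))) (fun _ _ => Nat.zero_le _)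
      (Finset.mem_univ i)
    simpa using this
  have hfin : ∀ k : ℕ, k < n i → vi ᵥ* (Ai ^ k * Bi) = 0 := by
    intro k hk
    have h0 := reach_dual_vecMul A B v hvan k (lt_of_lt_of_le hk hniN)
    funext γ
    rw [← Matrix.vecMul_vecMul]
    have h1 : ((vi ᵥ* (Ai ^ k)) ᵥ* Bi) γ
        = ∑ α : Fin (n i), (vi ᵥ* (Ai ^ k)) α * Bi α γ := rfl
    have h2 : (v ᵥ* (A ^ k * B)) (⟨i, γ⟩ : BIdx m)
        = ∑ α : Fin (n i), (v ᵥ* (A ^ k)) ⟨i, α⟩ * B ⟨i, α⟩ ⟨i, γ⟩ := by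
      rw [← Matrix.vecMul_vecMul]
      exact block_sum m B hB (v ᵥ* (A ^ k)) (key k).1 γ
    have h3 : ((vi ᵥ* (Ai ^ k)) ᵥ* Bi) γ = (v ᵥ* (A ^ k * B)) (⟨i, γ⟩ : BIdx m) := by
      rw [h1, h2]
      refine Finset.sum_congr rfl fun α _ => ?_
      rw [(key k).2 α]
      rfl
    rw [h3, h0]
    rfl
  have hvi0 : vi = 0 := by
    refine eq_zero_of_reach_eq_top Ai Bi vi (hloc i) ?_
    intro k hk
    exact hfin k (by simpa using hk)
  obtain ⟨β, hβ⟩ := hiS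
  exact hβ (congrFun hvi0 β)
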